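/- Let σ : [k] → [n] be a monotone map with σ(k) = n, let κ be the least element of [k] with σ(κ) = n, and assume κ ≥ 1; set ℓ := n − σ(κ−1). Define Z_σ ⊆ [k] × [n] (with the product order) to consist of the pairs (x, σ(x)) for 0 ≤ x < κ together with all pairs (x, y) with κ ≤ x ≤ k and σ(0) ≤ y ≤ n. Then: (i) (0, σ(0)) is the least element of Z_σ and (k, n) is the greatest; (ii) the map ρ_σ : [k+ℓ] → Z_σ defined by ρ_σ(j) = (j, σ(j)) for 0 ≤ j ≤ κ−1, ρ_σ(j) = (κ, σ(κ−1) + (j − κ)) for κ ≤ j ≤ κ+ℓ, and ρ_σ(j) = (j − ℓ, n) for κ+ℓ+1 ≤ j ≤ k+ℓ, is a strictly increasing saturated chain in Z_σ from (0, σ(0)) to (k, n), i.e. each pair ρ_σ(j) < ρ_σ(j+1) is a covering relation in Z_σ. -/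
import Mathlib


/-- The poset Z_σ ⊆ [k] × [n]: the graph of σ below κ, together with the full
rectangle [κ,k] × [σ(0),n]. -/
def Zset (k n κ : ℕ) (σ : ℕ → ℕ) : Set (ℕ × ℕ) :=
  {p | (p.1 < κ ∧ p.2 = σ p.1) ∨
       (κ ≤ p.1 ∧ p.1 ≤ k ∧ σ 0 ≤ p.2 ∧ p.2 ≤ n)}

/-- The distinguished chain ρ_σ : [k+ℓ] → Z_σ defining the simplex 𝖡(σ). -/
def rho (κ ℓ n : ℕ) (σ : ℕ → ℕ) (j : ℕ) : ℕ × ℕ :=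
  if j < κ then (j, σ j)
  else if j ≤ κ + ℓ then (κ, σ (κ - 1) + (j - κ))
  else (j - ℓ, n)

/-- (0,σ(0)) is least and (k,n) greatest in Z_σ, and ρ_σ is a
strictly increasing saturated chain in Z_σ from (0,σ(0)) to (k,n) (each step
is a covering relation in Z_σ). Here ℓ = n − σ(κ−1). -/
theorem stmt_12 (k n κ : ℕ) (σ : ℕ → ℕ)
    (hmono : ∀ a b : ℕ, a ≤ b → b ≤ k → σ a ≤ σ b)
    (hσk : σ k = n) (hκk : κ ≤ k) (hκ : σ κ = n)
    (hleast : ∀ x, x < κ → σ x ≠ n) (hκ1 : 1 ≤ κ) :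
    IsLeast (Zset k n κ σ) (0, σ 0) ∧
    IsGreatest (Zset k n κ σ) (k, n) ∧
    (∀ j, j ≤ k + (n - σ (κ - 1)) →
      rho κ (n - σ (κ - 1)) n σ j ∈ Zset k n κ σ) ∧
    rho κ (n - σ (κ - 1)) n σ 0 = (0, σ 0) ∧
    rho κ (n - σ (κ - 1)) n σ (k + (n - σ (κ - 1))) = (k, n) ∧
    (∀ j, j < k + (n - σ (κ - 1)) →
      rho κ (n - σ (κ - 1)) n σ j < rho κ (n - σ (κ - 1)) n σ (j + 1)) ∧
    (∀ j, j < k + (n - σ (κ - 1)) → ∀ w ∈ Zset k n κ σ,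
      ¬(rho κ (n - σ (κ - 1)) n σ j < w ∧
        w < rho κ (n - σ (κ - 1)) n σ (j + 1))) := by

  have hσle : ∀ x ≤ k, σ x ≤ n := fun x hx => hσk ▸ hmono x k hx le_rfl
  have hσκ1 : σ (κ - 1) < n :=
    lt_of_le_of_ne (hσle _ (by omega)) (hleast _ (by omega))
  set ℓ := n - σ (κ - 1) with hℓdef
  have hsum : σ (κ - 1) + ℓ = n := by omega
  have hℓ1 : 1 ≤ ℓ := by omega
  have hσ0n : σ 0 ≤ n := hσle 0 (by omega)
  refine ⟨⟨?_, ?_⟩, ⟨?_, ?_⟩, ?_, ?_, ?_, ?_, ?_⟩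
  · exact Or.inl ⟨by omega, rfl⟩
  · rintro ⟨a, b⟩ (⟨h1, h2⟩ | ⟨h1, h2, h3, h4⟩)
    · exact ⟨Nat.zero_le _, h2 ▸ hmono 0 a (Nat.zero_le _) (by omega)⟩
    · exact ⟨Nat.zero_le _, h3⟩
  · exact Or.inr ⟨hκk, le_rfl, hσ0n, le_rfl⟩
  · rintro ⟨a, b⟩ (⟨h1, h2⟩ | ⟨h1, h2, h3, h4⟩)
    · exact ⟨by omega, h2 ▸ hσle a (by omega)⟩
    · exact ⟨h2, h4⟩
  · intro j hj
    by_cases h1 : j < κ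
    · simp only [rho, if_pos h1]
      exact Or.inl ⟨h1, rfl⟩
    · by_cases h2 : j ≤ κ + ℓ
      · simp only [rho, if_neg h1, if_pos h2]
        exact Or.inr ⟨le_rfl, hκk, le_trans (hmono 0 (κ-1) (by omega) (by omega)) (by omega), by omega⟩
      · simp only [rho, if_neg h1, if_neg h2]
        exact Or.inr ⟨by omega, by omega, hσ0n, le_rfl⟩
  · simp only [rho, if_pos (show 0 < κ by omega)]
  · by_cases h : k + ℓ ≤ κ + ℓ
    · have hk : κ = k := by omega
      simp only [rho, if_neg (show ¬ k + ℓ < κ by omega), if_pos h]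
      rw [Prod.mk.injEq]
      constructor
      · omega
      · omega
    · simp only [rho, if_neg (show ¬ k + ℓ < κ by omega), if_neg (by omega : ¬ k + ℓ ≤ κ + ℓ)]
      rw [Prod.mk.injEq]
      exact ⟨by omega, rfl⟩
  · intro j hj
    by_cases h1 : j + 1 < κ
    · simp only [rho, if_pos (show j < κ by omega), if_pos h1]
      exact Prod.mk_lt_mk.mpr (Or.inl ⟨by omega, hmono j (j+1) (by omega) (by omega)⟩)
    · by_cases h2 : j < κ
      · -- j + 1 = κ
        have hjκ : j + 1 = κ := by omega
        simp only [rho, if_pos h2, if_neg (show ¬ j + 1 < κ by omega),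
          if_pos (show j + 1 ≤ κ + ℓ by omega)]
        have : σ j = σ (κ - 1) := by rw [show κ - 1 = j by omega]
        exact Prod.mk_lt_mk.mpr (Or.inl ⟨by omega, by omega⟩)
      · by_cases h3 : j + 1 ≤ κ + ℓ
        · simp only [rho, if_neg h2, if_neg (show ¬ j + 1 < κ by omega),
            if_pos (show j ≤ κ + ℓ by omega), if_pos h3]
          exact Prod.mk_lt_mk.mpr (Or.inr ⟨le_rfl, by omega⟩)
        · by_cases h4 : j ≤ κ + ℓ
          · -- j = κ + ℓ
            simp only [rho, if_neg h2, if_neg (show ¬ j + 1 < κ by omega),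
              if_pos h4, if_neg h3]
            exact Prod.mk_lt_mk.mpr (Or.inl ⟨by omega, by omega⟩)
          · simp only [rho, if_neg h2, if_neg (show ¬ j + 1 < κ by omega),
              if_neg h4, if_neg h3, if_neg (show ¬ j < κ by omega)]
            exact Prod.mk_lt_mk.mpr (Or.inl ⟨by omega, le_rfl⟩)
  · rintro j hj ⟨a, b⟩ hw ⟨hl1, hl2⟩
    have hwz : (a < κ ∧ b = σ a) ∨ (κ ≤ a ∧ a ≤ k ∧ σ 0 ≤ b ∧ b ≤ n) := hw
    by_cases h1 : j + 1 < κ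
    · simp only [rho, if_pos (show j < κ by omega), if_pos h1] at hl1 hl2
      have e1 : j ≤ a ∧ σ j ≤ b := Prod.mk_le_mk.mp hl1.le
      have e2 : a ≤ j + 1 ∧ b ≤ σ (j + 1) := Prod.mk_le_mk.mp hl2.le
      have n1 : ¬(j = a ∧ σ j = b) := fun h => hl1.ne (Prod.ext h.1 h.2)
      have n2 : ¬(a = j + 1 ∧ b = σ (j + 1)) := fun h => hl2.ne (Prod.ext h.1 h.2)
      rcases hwz with ⟨ha, hb⟩ | ⟨ha, _⟩
      · -- b = σ a, a = j or j + 1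
        rcases (show a = j ∨ a = j + 1 by omega) with h | h
        · subst h; exact n1 ⟨rfl, hb.symm⟩
        · subst h; exact n2 ⟨rfl, hb⟩
      · omega
    · by_cases h2 : j < κ
      · -- j + 1 = κ
        simp only [rho, if_pos h2, if_neg (show ¬ j + 1 < κ by omega),
          if_pos (show j + 1 ≤ κ + ℓ by omega)] at hl1 hl2
        have hσj : σ (κ - 1) = σ j := by rw [show κ - 1 = j by omega]
        have e1 : j ≤ a ∧ σ j ≤ b := Prod.mk_le_mk.mp hl1.le
        have e2 : a ≤ κ ∧ b ≤ σ (κ - 1) + (j + 1 - κ) := Prod.mk_le_mk.mp hl2.le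
        have n1 : ¬(j = a ∧ σ j = b) := fun h => hl1.ne (Prod.ext h.1 h.2)
        have n2 : ¬(a = κ ∧ b = σ (κ - 1) + (j + 1 - κ)) :=
          fun h => hl2.ne (Prod.ext h.1 h.2)
        omega
      · by_cases h3 : j + 1 ≤ κ + ℓ
        · simp only [rho, if_neg h2, if_neg (show ¬ j + 1 < κ by omega),
            if_pos (show j ≤ κ + ℓ by omega), if_pos h3] at hl1 hl2
          have e1 : κ ≤ a ∧ σ (κ - 1) + (j - κ) ≤ b := Prod.mk_le_mk.mp hl1.le
          have e2 : a ≤ κ ∧ b ≤ σ (κ - 1) + (j + 1 - κ) := Prod.mk_le_mk.mp hl2.le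
          have n1 : ¬(κ = a ∧ σ (κ - 1) + (j - κ) = b) := fun h => hl1.ne (Prod.ext h.1 h.2)
          have n2 : ¬(a = κ ∧ b = σ (κ - 1) + (j + 1 - κ)) := fun h => hl2.ne (Prod.ext h.1 h.2)
          omega
        · by_cases h4 : j ≤ κ + ℓ
          · simp only [rho, if_neg h2, if_neg (show ¬ j + 1 < κ by omega),
              if_pos h4, if_neg h3] at hl1 hl2
            have e1 : κ ≤ a ∧ σ (κ - 1) + (j - κ) ≤ b := Prod.mk_le_mk.mp hl1.le
            have e2 : a ≤ j + 1 - ℓ ∧ b ≤ n := Prod.mk_le_mk.mp hl2.le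
            have n1 : ¬(κ = a ∧ σ (κ - 1) + (j - κ) = b) := fun h => hl1.ne (Prod.ext h.1 h.2)
            have n2 : ¬(a = j + 1 - ℓ ∧ b = n) := fun h => hl2.ne (Prod.ext h.1 h.2)
            omega
          · simp only [rho, if_neg h2, if_neg (show ¬ j + 1 < κ by omega),
              if_neg h4, if_neg h3, if_neg (show ¬ j < κ by omega)] at hl1 hl2
            have e1 : j - ℓ ≤ a ∧ n ≤ b := Prod.mk_le_mk.mp hl1.le
            have e2 : a ≤ j + 1 - ℓ ∧ b ≤ n := Prod.mk_le_mk.mp hl2.le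
            have n1 : ¬(j - ℓ = a ∧ n = b) := fun h => hl1.ne (Prod.ext h.1 h.2)
            have n2 : ¬(a = j + 1 - ℓ ∧ b = n) := fun h => hl2.ne (Prod.ext h.1 h.2)
            omega
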